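/- Let G be a finite simple graph with vertex set V and edge set E, and let F̄₂ denote the algebraic closure of the field with two elements. Then G is 3-colorable if and only if the 3-coloring polynomial system of G over F̄₂ has a common zero in F̄₂^V, i.e., there exists a : V → F̄₂ with a_v^3 + 1 = 0 for every v ∈ V and a_u^2 + a_u a_v + a_v^2 = 0 for every edge {u,v} ∈ E. -/

import Mathlib

/-- A finite simple graph `G` is `3`-colorable if and only if the
`3`-coloring polynomial system of `G` over the algebraic closure of `𝔽₂` has a common
zero: there is `a : V → F̄₂` with `a v ^ 3 + 1 = 0` for every vertex `v` and
`a u ^ 2 + a u * a v + a v ^ 2 = 0` for every edge `{u,v}`. -/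
theorem three_colorable_iff_system_has_zero_F2bar
    {V : Type*} [Fintype V] (G : SimpleGraph V) :
    G.Colorable 3 ↔
      ∃ a : V → AlgebraicClosure (ZMod 2),
        (∀ v : V, a v ^ 3 + 1 = 0) ∧
        (∀ u v : V, G.Adj u v → a u ^ 2 + a u * a v + a v ^ 2 = 0) := by
  set K := AlgebraicClosure (ZMod 2) with hK
  have h2 : (2 : K) = 0 := by
    have : CharP K 2 := inferInstance
    exact_mod_cast CharP.cast_eq_zero K 2
  obtain ⟨ω, hω⟩ : ∃ ω : K, ω ^ 2 + ω + 1 = 0 := by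
    have hdeg : (Polynomial.X ^ 2 + Polynomial.X + 1 : Polynomial K).degree = 2 := by
      compute_degree!
    obtain ⟨ω, hω⟩ := IsAlgClosed.exists_root (k := K)
      (Polynomial.X ^ 2 + Polynomial.X + 1) (by rw [hdeg]; norm_num)
    exact ⟨ω, by simpa using hω⟩
  have hω1 : ω ≠ 1 := fun h => by
    rw [h] at hω; exact one_ne_zero (α := K) (by linear_combination hω - h2)
  have hω0 : ω ≠ 0 := fun h => by rw [h] at hω; simpa using hω
  have hsq1 : ω ^ 2 ≠ 1 := fun h => hω0 (by linear_combination hω - h - h2)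
  have hsqω : ω ^ 2 ≠ ω := fun h =>
    one_ne_zero (α := K) (by linear_combination hω - h - ω * h2)
  have hf1 : ∀ i : Fin 3, (![1, ω, ω ^ 2] i) ^ 3 + 1 = 0 := by
    intro i
    fin_cases i
    · show (1 : K) ^ 3 + 1 = 0; linear_combination h2
    · show ω ^ 3 + 1 = 0; linear_combination (ω - 1) * hω + h2
    · show (ω ^ 2) ^ 3 + 1 = 0
      linear_combination (ω - 1) * (ω ^ 3 + 1) * hω + h2
  have hf2 : ∀ i j : Fin 3, i ≠ j →
      (![1, ω, ω ^ 2] i) ^ 2 + (![1, ω, ω ^ 2] i) * (![1, ω, ω ^ 2] j)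
        + (![1, ω, ω ^ 2] j) ^ 2 = 0 := by
    intro i j hne
    fin_cases i <;> fin_cases j <;>
      simp <;>
      first
        | exact absurd rfl hne
        | linear_combination hω
        | linear_combination (ω ^ 2 - ω + 1) * hω
        | linear_combination ω ^ 2 * hω
  constructor
  · rintro ⟨c⟩
    exact ⟨fun v => ![1, ω, ω ^ 2] (c v), fun v => hf1 _,
      fun u v huv => hf2 _ _ (c.valid huv)⟩
  · rintro ⟨a, h1, he⟩
    classical
    have hmem : ∀ v, a v = 1 ∨ a v = ω ∨ a v = ω ^ 2 := by
      intro v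
      have hz : (a v + 1) * (a v + ω) * (a v + ω ^ 2) = 0 := by
        linear_combination h1 v + ((a v) ^ 2 + (a v) * ω + ω - 1) * hω
      rcases mul_eq_zero.mp hz with h | h
      · rcases mul_eq_zero.mp h with h | h
        · left; linear_combination h - h2
        · right; left; linear_combination h - ω * h2
      · right; right; linear_combination h - ω ^ 2 * h2
    have hane : ∀ u v, G.Adj u v → a u ≠ a v := by
      intro u v huv heq
      have hedge := he u v huv
      rw [heq] at hedge
      have hv2 : a v ^ 2 = 0 := by linear_combination hedge - (a v) ^ 2 * h2
      have hv0 : a v = 0 := pow_eq_zero_iff (n := 2) (by norm_num) |>.mp hv2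
      have hv3 := h1 v
      rw [hv0] at hv3
      simpa using hv3
    refine ⟨⟨fun v => if a v = 1 then 0 else if a v = ω then 1 else 2, ?_⟩⟩
    intro u v huv hcol
    try dsimp at hcol
    rcases hmem u with hu | hu | hu <;> rcases hmem v with hv | hv | hv <;>
      first
        | exact hane u v huv (hu.trans hv.symm)
        | simp [hu, hv, hω1, hsq1, hsqω] at hcol
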